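/- Let n ≥ 1, b ≥ 1, r ≥ 2 be integers. Let L = {x ∈ ℤ^r : ∑_i x_i = 0} and Λ = {x ∈ L : n divides b(x_i − x_j) for all i, j}. Then Λ has finite index in L and [L : Λ] = n^{r−1} / (gcd(br, n) · gcd(b, n)^{r−2}). -/
import Mathlib


/-- For `L = {x ∈ ℤ^r : ∑ xᵢ = 0}` and
`Λ = {x ∈ L : n ∣ b(xᵢ - xⱼ) for all i,j}`, the index of `Λ` in `L` is finite and equals
`n^(r-1) / (gcd(br,n)·gcd(b,n)^(r-2))`. -/
theorem stmt_3 (n b r : ℕ) (hn : 1 ≤ n) (hb : 1 ≤ b) (hr : 2 ≤ r)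
    (L : AddSubgroup (Fin r → ℤ)) (hL : ∀ x, x ∈ L ↔ (∑ i, x i) = 0)
    (Λ : AddSubgroup L)
    (hΛ : ∀ x : L, x ∈ Λ ↔ ∀ i j : Fin r, (n : ℤ) ∣ (b : ℤ) * ((x : Fin r → ℤ) i - (x : Fin r → ℤ) j)) :
    Λ.index ≠ 0 ∧
      Λ.index * (Nat.gcd (b * r) n * Nat.gcd b n ^ (r - 2)) = n ^ (r - 1) := by
  classical
  set g := Nat.gcd b n with hgdef
  have hgpos : 0 < g := Nat.gcd_pos_of_pos_left n hb
  set m := n / g with hmdef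
  have hgn : g ∣ n := Nat.gcd_dvd_right b n
  have hgb : g ∣ b := Nat.gcd_dvd_left b n
  have hmg : g * m = n := Nat.mul_div_cancel' hgn
  have hmpos : 0 < m := Nat.div_pos (Nat.le_of_dvd (by omega) hgn) hgpos
  haveI : NeZero m := ⟨by omega⟩
  set b' := b / g with hb'def
  have hb'm : g * b' = b := Nat.mul_div_cancel' hgb
  have hco : Nat.Coprime b' m := Nat.coprime_div_gcd_div_gcd hgpos
  -- the key divisibility equivalence
  have key : ∀ z : ℤ, (n : ℤ) ∣ (b : ℤ) * z ↔ (m : ℤ) ∣ z := by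
    intro z
    have hncast : (n : ℤ) = (g : ℤ) * (m : ℤ) := by exact_mod_cast hmg.symm
    have hbcast : (b : ℤ) = (g : ℤ) * (b' : ℤ) := by exact_mod_cast hb'm.symm
    have hg0 : (g : ℤ) ≠ 0 := by exact_mod_cast hgpos.ne'
    have hcoZ : IsCoprime (m : ℤ) (b' : ℤ) := Nat.isCoprime_iff_coprime.mpr hco.symm
    constructor
    · intro h
      rw [hncast, hbcast, mul_assoc, mul_dvd_mul_iff_left hg0] at h
      exact hcoZ.dvd_of_dvd_mul_left h
    · intro h
      rw [hncast, hbcast, mul_assoc]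
      exact mul_dvd_mul_left _ (h.mul_left _)
  set i0 : Fin r := ⟨0, by omega⟩ with hi0def
  set i1 : Fin r := ⟨1, by omega⟩ with hi1def
  have hi01 : i1 ≠ i0 := by simp [hi0def, hi1def, Fin.ext_iff]
  -- the homomorphism f : L → (Fin r → ZMod m)
  set f : L →+ (Fin r → ZMod m) :=
    { toFun := fun x i => (((x : Fin r → ℤ) i - (x : Fin r → ℤ) i0 : ℤ) : ZMod m)
      map_zero' := by ext i; simp
      map_add' := by
        intro x y
        ext i
        simp only [AddSubgroup.coe_add, Pi.add_apply]
        push_cast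
        ring } with hfdef
  have hfapply : ∀ (x : L) (i : Fin r),
      f x i = (((x : Fin r → ℤ) i - (x : Fin r → ℤ) i0 : ℤ) : ZMod m) := fun _ _ => rfl
  -- Λ is the kernel of f
  have hΛker : Λ = f.ker := by
    ext x
    rw [hΛ, AddMonoidHom.mem_ker]
    constructor
    · intro h
      funext i
      simp only [Pi.zero_apply, hfapply, ZMod.intCast_zmod_eq_zero_iff_dvd]
      exact (key _).mp (h i i0)
    · intro h i j
      have hi := congrFun h i
      have hj := congrFun h j
      rw [hfapply, Pi.zero_apply, ZMod.intCast_zmod_eq_zero_iff_dvd] at hi hj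
      refine (key _).mpr ?_
      have : (x : Fin r → ℤ) i - (x : Fin r → ℤ) j =
          ((x : Fin r → ℤ) i - (x : Fin r → ℤ) i0) -
            ((x : Fin r → ℤ) j - (x : Fin r → ℤ) i0) := by ring
      rw [this]
      exact dvd_sub hi hj
  set d := Nat.gcd r m with hddef
  have hdpos : 0 < d := Nat.gcd_pos_of_pos_left m (by omega)
  haveI : NeZero d := ⟨by omega⟩
  have hdm : d ∣ m := Nat.gcd_dvd_right r m
  have hdr : d ∣ r := Nat.gcd_dvd_left r m
  -- the homomorphism ψ whose kernel is the range of f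
  set ψ : (Fin r → ZMod m) →+ (ZMod m × ZMod d) :=
    { toFun := fun v => (v i0, ZMod.castHom hdm (ZMod d) (∑ i, v i))
      map_zero' := by simp
      map_add' := by
        intro v w
        simp only [Pi.add_apply, Finset.sum_add_distrib, map_add, Prod.mk_add_mk] } with hψdef
  have hψapply : ∀ v : Fin r → ZMod m,
      ψ v = (v i0, ZMod.castHom hdm (ZMod d) (∑ i, v i)) := fun _ => rfl
  have hrange : f.range = ψ.ker := by
    ext v
    rw [AddMonoidHom.mem_range, AddMonoidHom.mem_ker]
    constructor
    · rintro ⟨x, rfl⟩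
      have hx0 : (∑ i, (x : Fin r → ℤ) i) = 0 := (hL _).mp x.2
      have hsum : (∑ i, ((x : Fin r → ℤ) i - (x : Fin r → ℤ) i0)) =
          -((r : ℤ) * (x : Fin r → ℤ) i0) := by
        rw [Finset.sum_sub_distrib, hx0, Finset.sum_const, Finset.card_univ,
          Fintype.card_fin]
        push_cast
        ring
      have h2 : (∑ i, f x i) = ((-((r : ℤ) * (x : Fin r → ℤ) i0) : ℤ) : ZMod m) := by
        rw [← hsum]
        simp [hfapply]
      rw [hψapply]
      refine Prod.ext ?_ ?_
      · simp [hfapply]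
      · show ZMod.castHom hdm (ZMod d) (∑ i, f x i) = 0
        rw [h2, map_intCast, ZMod.intCast_zmod_eq_zero_iff_dvd]
        exact dvd_neg.mpr ((Int.natCast_dvd_natCast.mpr hdr).mul_right _)
    · intro hv
      rw [hψapply, Prod.ext_iff] at hv
      obtain ⟨hv1, hv2⟩ := hv
      simp only [Prod.fst_zero, Prod.snd_zero] at hv1 hv2
      set S : ℕ := ∑ i, (v i).val with hSdef
      have hSsum : ((S : ℕ) : ZMod m) = ∑ i, v i := by
        rw [hSdef]
        push_cast
        exact Finset.sum_congr rfl fun i _ => ZMod.natCast_zmod_val (v i)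
      have hSd : ((S : ℕ) : ZMod d) = 0 := by
        have := congrArg (ZMod.castHom hdm (ZMod d)) hSsum
        rw [map_natCast] at this
        rw [this, hv2]
      have hdS : (d : ℤ) ∣ (S : ℤ) := by
        rw [ZMod.natCast_eq_zero_iff] at hSd
        exact_mod_cast Int.natCast_dvd_natCast.mpr hSd
      obtain ⟨k, hk⟩ := hdS
      set α : ℤ := Nat.gcdA r m * k with hαdef
      set β : ℤ := Nat.gcdB r m * k with hβdef
      have hSrm : (S : ℤ) = (r : ℤ) * α + (m : ℤ) * β := by
        rw [hk, hαdef, hβdef, hddef, Nat.gcd_eq_gcd_ab r m]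
        ring
      set e : Fin r → ℤ := fun i => ((v i).val : ℤ) + (if i = i0 then -((m : ℤ) * β) else 0)
        with hedef
      have hesum : (∑ i, e i) = (r : ℤ) * α := by
        have hvalsum : (∑ i, ((v i).val : ℤ)) = (S : ℤ) := by
          rw [hSdef]; push_cast; rfl
        rw [hedef]
        rw [Finset.sum_add_distrib, Finset.sum_ite_eq' Finset.univ i0, hvalsum]
        simp only [Finset.mem_univ, if_true]
        rw [hSrm]
        ring
      set y : Fin r → ℤ := fun i => e i - α with hydef
      have hyL : y ∈ L := by
        rw [hL, hydef]
        simp only [Finset.sum_sub_distrib, hesum, Finset.sum_const, Finset.card_univ,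
          Fintype.card_fin]
        push_cast
        ring
      refine ⟨⟨y, hyL⟩, ?_⟩
      funext i
      rw [hfapply]
      have hyi : y i - y i0 = e i - e i0 := by rw [hydef]; ring
      have he0 : e i0 = ((v i0).val : ℤ) - (m : ℤ) * β := by rw [hedef]; simp; ring
      have hv0val : (v i0).val = 0 := by rw [hv1]; exact ZMod.val_zero
      show ((y i - y i0 : ℤ) : ZMod m) = v i
      rw [hyi, he0, hv0val, hedef]
      push_cast
      simp only [ZMod.natCast_self, zero_mul, mul_zero]
      by_cases hi : i = i0
      · subst hi
        simp only [if_pos rfl, hv0val]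
        rw [hv1]
        push_cast
        simp [ZMod.natCast_self]
      · simp only [if_neg hi]
        simp [ZMod.natCast_self, ZMod.natCast_zmod_val]
  -- ψ is surjective
  have hψsurj : Function.Surjective ψ := by
    rintro ⟨a, c⟩
    refine ⟨Pi.single i0 a + Pi.single i1 (((c.val : ℕ) : ZMod m) - a), ?_⟩
    rw [hψapply]
    refine Prod.ext ?_ ?_
    · simp [Pi.single_apply, hi01]
    · show ZMod.castHom hdm (ZMod d) _ = c
      simp only [Pi.add_apply]
      rw [Finset.sum_add_distrib, Finset.sum_pi_single', Finset.sum_pi_single']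
      simp only [Finset.mem_univ, if_true]
      have hac : a + (((c.val : ℕ) : ZMod m) - a) = ((c.val : ℕ) : ZMod m) := by ring
      rw [hac, map_natCast]
      exact ZMod.natCast_zmod_val c
  -- cardinality computations
  have hindex1 : Λ.index = Nat.card ψ.ker := by
    rw [hΛker, AddSubgroup.index_ker f, ← hrange]
  have hcard_pi : Nat.card (Fin r → ZMod m) = m ^ r := by
    rw [Nat.card_pi]
    simp [Nat.card_zmod]
  have hcard_prod : Nat.card (ZMod m × ZMod d) = m * d := by
    rw [Nat.card_prod, Nat.card_zmod, Nat.card_zmod]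
  have hψindex : ψ.ker.index = m * d := by
    rw [AddSubgroup.index_ker ψ, AddMonoidHom.range_eq_top_of_surjective ψ hψsurj]
    rw [← hcard_prod]
    exact Nat.card_congr AddSubgroup.topEquiv.toEquiv
  have hmul : (m * d) * Nat.card ψ.ker = m ^ r := by
    rw [← hψindex, ← hcard_pi]
    exact AddSubgroup.index_mul_card ψ.ker
  have hpow : m ^ r = m * m ^ (r - 1) := by
    conv_lhs => rw [show r = 1 + (r - 1) by omega]
    rw [pow_add, pow_one]
  have hdk : d * Nat.card ψ.ker = m ^ (r - 1) := by
    have : m * (d * Nat.card ψ.ker) = m * m ^ (r - 1) := by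
      rw [← hpow, ← hmul]; ring
    exact Nat.eq_of_mul_eq_mul_left hmpos this
  have hΛd : Λ.index * d = m ^ (r - 1) := by rw [hindex1, mul_comm]; exact hdk
  -- gcd identity
  have hgcd : Nat.gcd (b * r) n = g * d := by
    rw [← hb'm, ← hmg, mul_assoc, Nat.gcd_mul_left, hco.gcd_mul_left_cancel r, hddef]
  constructor
  · intro h
    rw [h, zero_mul] at hΛd
    have : m ^ (r - 1) ≠ 0 := pow_ne_zero _ (by omega)
    exact this hΛd.symm
  · rw [hgcd]
    have hg1 : g * d * g ^ (r - 2) = d * g ^ (r - 1) := by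
      have : g ^ (r - 1) = g * g ^ (r - 2) := by
        conv_lhs => rw [show r - 1 = 1 + (r - 2) by omega]
        rw [pow_add, pow_one]
      rw [this]; ring
    rw [hg1, ← mul_assoc, hΛd, ← mul_pow]
    rw [show m * g = n by rw [mul_comm]; exact hmg]
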